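/- There exists an absolute constant C such that the following holds. Let G = Z_{m_1} ⊕ ... ⊕ Z_{m_d} be a finite Abelian group of size n with d = d(G), and let k and M be positive integers with 2M < min_j m_j. Let W and W' be i.i.d. uniform on the lattice ball B_k^±(M), set V := W − W', I := {i ∈ {1,...,k} : W_i ≠ W'_i}, and g := gcd(V_1, ..., V_k, n), and let Z_1, ..., Z_k be i.i.d. uniform on G, independent of (W, W'). Then for every nonempty set I_0 ⊆ {1,...,k}: n·P( Σ_i V_i·Z_i = 0 | I = I_0 ) ≤ E[ g^d | I = I_0 ]; and E[ g^d | I = I_0 ] ≤ C·2^d·(2M)^{d − |I_0| + 2} if |I_0| ≤ d + 1, while E[ g^d | I = I_0 ] ≤ 1 + 5·(3/2)^{2d − |I_0|} if |I_0| ≥ d + 2. -/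

import Mathlib

/-- Minimal size of a generating subset of the additive group `G`. -/
noncomputable def minGenAdd (G : Type*) [AddCommGroup G] : ℕ :=
  sInf {n : ℕ | ∃ s : Finset G, s.card = n ∧ AddSubgroup.closure (s : Set G) = ⊤}

/-- Probability, over a uniformly random `k`-tuple of elements of `G`, of the event `p`. -/
noncomputable def tupleProb (G : Type*) [Fintype G] (k : ℕ) (p : (Fin k → G) → Prop) : ℝ :=
  (Nat.card {z : Fin k → G // p z} : ℝ) / (Fintype.card G : ℝ) ^ k

/-- Membership in the `L¹` lattice ball of radius `M` in dimension `k`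
(undirected: `ℤ^k`; directed `undir = false`: `ℤ_{≥0}^k`). -/
def inBall (undir : Bool) {k : ℕ} (M : ℕ) (w : Fin k → ℤ) : Prop :=
  (∑ i, (w i).natAbs) ≤ M ∧ (undir = false → ∀ i, 0 ≤ w i)

/-- `gcd(v₁, ..., v_k, n)`. -/
noncomputable def gcdWithN {k : ℕ} (v : Fin k → ℤ) (n : ℕ) : ℕ :=
  Nat.gcd (Finset.univ.gcd fun i => (v i).natAbs) n

/-- The event `{W, W' ∈ B_k^±(M), I(W,W') = I₀}` for a pair `p = (W, W')`. -/
def pairEvent (undir : Bool) {k : ℕ} (M : ℕ) (I₀ : Finset (Fin k)) :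
    Set ((Fin k → ℤ) × (Fin k → ℤ)) :=
  {p | inBall undir M p.1 ∧ inBall undir M p.2 ∧ {i | p.1 i ≠ p.2 i} = (I₀ : Set (Fin k))}

open Finset

section auxiliary


-- per-x counting lemma
lemma countY (e : ℕ) (he : 0 < e) (c d x : ℤ) (hx : x ∈ Finset.Icc c d) :
    (e : ℤ) * ((Finset.Icc c d).filter (fun y => y ≠ x ∧ (e:ℤ) ∣ x - y)).card ≤ d - c := by
  rw [Finset.mem_Icc] at hx
  have he' : (0:ℤ) < (e:ℤ) := by exact_mod_cast he
  set A : ℤ := -((d - x) / e) with hA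
  set B : ℤ := (x - c) / e with hB
  have hA0 : A ≤ 0 := by
    simp only [hA, neg_nonpos]
    exact Int.ediv_nonneg (by omega) he'.le
  have hB0 : 0 ≤ B := Int.ediv_nonneg (by omega) he'.le
  have hsub : ∀ y ∈ (Finset.Icc c d).filter (fun y => y ≠ x ∧ (e:ℤ) ∣ x - y),
      (x - y) / e ∈ (Finset.Icc A B).erase 0 := by
    intro y hy
    simp only [Finset.mem_filter, Finset.mem_Icc] at hy
    obtain ⟨⟨hcy, hyd⟩, hyx, hdvd⟩ := hy
    obtain ⟨t, ht⟩ := hdvd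
    have htv : (x - y) / e = t := by rw [ht]; exact Int.mul_ediv_cancel_left t (by omega)
    rw [htv]
    have hc1 : t * (e:ℤ) = (e:ℤ) * t := mul_comm _ _
    have ht0 : t ≠ 0 := by rintro rfl; simp at ht; omega
    have h1 : t ≤ B := by
      rw [hB, Int.le_ediv_iff_mul_le he']
      omega
    have h2 : A ≤ t := by
      rw [hA, neg_le, Int.le_ediv_iff_mul_le he']
      have hc2 : -t * (e:ℤ) = -((e:ℤ) * t) := by ring
      omega
    simp [Finset.mem_erase, Finset.mem_Icc, ht0, h1, h2]
  have hinj : Set.InjOn (fun y => (x - y) / e)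
      ((Finset.Icc c d).filter (fun y => y ≠ x ∧ (e:ℤ) ∣ x - y)) := by
    intro y1 h1 y2 h2 heq
    simp only [Finset.coe_filter, Set.mem_setOf_eq, Finset.mem_Icc] at h1 h2
    obtain ⟨t1, ht1⟩ := h1.2.2
    obtain ⟨t2, ht2⟩ := h2.2.2
    simp only at heq
    rw [ht1, ht2, Int.mul_ediv_cancel_left _ (by omega : (e:ℤ) ≠ 0),
      Int.mul_ediv_cancel_left _ (by omega : (e:ℤ) ≠ 0)] at heq
    subst heq
    omega
  have hcard := Finset.card_le_card_of_injOn _ hsub hinj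
  have h0mem : (0:ℤ) ∈ Finset.Icc A B := by simp [Finset.mem_Icc, hA0, hB0]
  have hce : ((Finset.Icc A B).erase 0).card = (Finset.Icc A B).card - 1 :=
    Finset.card_erase_of_mem h0mem
  have hicc : ((Finset.Icc A B).card : ℤ) = B + 1 - A := Int.card_Icc_of_le _ _ (by omega)
  have hpos : 1 ≤ (Finset.Icc A B).card := Finset.card_pos.mpr ⟨0, h0mem⟩
  have hcard' : (((Finset.Icc c d).filter (fun y => y ≠ x ∧ (e:ℤ) ∣ x - y)).card : ℤ) ≤ B - A := by
    have h2 : (((Finset.Icc A B).erase 0).card : ℤ) = B - A := by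
      rw [hce]
      push_cast [Nat.cast_sub hpos]
      omega
    calc (((Finset.Icc c d).filter (fun y => y ≠ x ∧ (e:ℤ) ∣ x - y)).card : ℤ)
        ≤ (((Finset.Icc A B).erase 0).card : ℤ) := by exact_mod_cast hcard
      _ = B - A := h2
  have hBe : (e:ℤ) * B ≤ x - c := by
    have h3 := Int.ediv_mul_le (x - c) (by omega : (e:ℤ) ≠ 0)
    rw [hB]; nlinarith
  have hAe : (e:ℤ) * (-A) ≤ d - x := by
    have h3 := Int.ediv_mul_le (d - x) (by omega : (e:ℤ) ≠ 0)
    rw [hA, neg_neg]; nlinarith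
  nlinarith [hcard']

-- 2D counting

lemma prod_filter_card (X Y : Finset ℤ) (P : ℤ → ℤ → Prop) [∀ x y, Decidable (P x y)] :
    ((X ×ˢ Y).filter (fun z => P z.1 z.2)).card
      = ∑ x ∈ X, (Y.filter (fun y => P x y)).card := by
  rw [Finset.card_eq_sum_card_fiberwise
    (f := Prod.fst) (t := X) (fun z hz => (Finset.mem_product.mp (Finset.mem_filter.mp hz).1).1)]
  refine Finset.sum_congr rfl fun x hx => ?_
  refine Finset.card_bij (fun z _ => z.2) ?_ ?_ ?_
  · intro z hz
    simp only [Finset.mem_filter, Finset.mem_product] at hz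
    simp only [Finset.mem_filter]
    exact ⟨hz.1.1.2, by rw [← hz.2]; exact hz.1.2⟩
  · intro z1 h1 z2 h2 heq
    simp only [Finset.mem_filter, Finset.mem_product] at h1 h2
    exact Prod.ext (h1.2.trans h2.2.symm) heq
  · intro y hy
    simp only [Finset.mem_filter] at hy
    exact ⟨(x, y), by simp [Finset.mem_filter, Finset.mem_product, hx, hy.1, hy.2], rfl⟩

lemma count2D (e : ℕ) (he : 0 < e) (a b c d : ℤ)
    (hsub : Finset.Icc a b ⊆ Finset.Icc c d) :
    e * ((Finset.Icc a b ×ˢ Finset.Icc c d).filter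
        (fun z => z.1 ≠ z.2 ∧ (e:ℤ) ∣ z.1 - z.2)).card
      ≤ ((Finset.Icc a b ×ˢ Finset.Icc c d).filter (fun z => z.1 ≠ z.2)).card := by
  rw [prod_filter_card _ _ (fun x y => x ≠ y ∧ (e:ℤ) ∣ x - y),
    prod_filter_card _ _ (fun x y => x ≠ y)]
  rw [Finset.mul_sum]
  refine Finset.sum_le_sum fun x hx => ?_
  have hxY : x ∈ Finset.Icc c d := hsub hx
  -- RHS card : filter y ≠ x
  have hR : (Finset.Icc c d |>.filter (fun y => ¬ x = y)).card
      = (Finset.Icc c d).card - 1 := by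
    have : (Finset.Icc c d |>.filter (fun y => ¬ x = y)) = (Finset.Icc c d).erase x := by
      ext y; simp [Finset.mem_erase, eq_comm, and_comm]
    rw [this, Finset.card_erase_of_mem hxY]
  have hL := countY e he c d x hxY
  -- filters: (fun y => x ≠ y ∧ e ∣ x - y) vs countY's (fun y => y ≠ x ∧ e ∣ x - y)
  have hsame : (Finset.Icc c d |>.filter (fun y => ¬ x = y ∧ (e:ℤ) ∣ x - y))
      = (Finset.Icc c d |>.filter (fun y => y ≠ x ∧ (e:ℤ) ∣ x - y)) := by
    apply Finset.filter_congr; intro y _; simp [eq_comm, ne_comm]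
  have hcard : ((Finset.Icc c d).card : ℤ) = d - c + 1 := by
    rw [Int.card_Icc_of_le]
    · ring
    · rw [Finset.mem_Icc] at hxY; omega
  have h1 : 1 ≤ (Finset.Icc c d).card := Finset.card_pos.mpr ⟨x, hxY⟩
  -- turn into ℤ
  have : (e:ℤ) * ((Finset.Icc c d |>.filter (fun y => ¬ x = y ∧ (e:ℤ) ∣ x - y)).card : ℤ)
      ≤ (((Finset.Icc c d |>.filter (fun y => ¬ x = y)).card : ℤ)) := by
    rw [hsame, hR]
    push_cast [Nat.cast_sub h1]
    omega
  exact_mod_cast this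

-- ball helpers

variable {k : ℕ}

lemma inBall_iff (undir : Bool) (M : ℕ) (w : Fin k → ℤ) :
    inBall undir M w ↔ (∑ i, |w i|) ≤ (M:ℤ) ∧ (undir = false → ∀ i, 0 ≤ w i) := by
  unfold inBall
  constructor
  · rintro ⟨h1, h2⟩
    refine ⟨?_, h2⟩
    calc (∑ i, |w i|) = ((∑ i, (w i).natAbs : ℕ) : ℤ) := by
          push_cast [Int.natCast_natAbs]; rfl
      _ ≤ (M:ℤ) := by exact_mod_cast h1
  · rintro ⟨h1, h2⟩
    refine ⟨?_, h2⟩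
    have : ((∑ i, (w i).natAbs : ℕ) : ℤ) ≤ (M:ℤ) := by
      calc ((∑ i, (w i).natAbs : ℕ) : ℤ) = ∑ i, |w i| := by
            push_cast [Int.natCast_natAbs]; rfl
        _ ≤ (M:ℤ) := h1
    exact_mod_cast this

lemma sumAbs_update (w : Fin k → ℤ) (i : Fin k) (x : ℤ) :
    (∑ j, |Function.update w i x j|) = (∑ j, |w j|) - |w i| + |x| := by
  have h1 : (fun j => |Function.update w i x j|) = Function.update (fun j => |w j|) i |x| := by
    funext j
    rcases eq_or_ne j i with rfl | hji
    · simp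
    · simp [Function.update_of_ne hji]
  rw [h1, Finset.sum_update_of_mem (Finset.mem_univ i)]
  have h2 : (∑ j, |w j|) = |w i| + ∑ j ∈ Finset.univ \ {i}, |w j| := by
    rw [Finset.sum_eq_sum_sdiff_singleton_add (Finset.mem_univ i) (fun j => |w j|)]
    ring
  omega


section steps

variable {k : ℕ} {undir : Bool} {M : ℕ} {I₀ : Finset (Fin k)}
  {T : Finset ((Fin k → ℤ) × (Fin k → ℤ))}
  (hT : ∀ p, p ∈ T ↔ p ∈ pairEvent undir M I₀)

-- swap version of count2D
lemma card_swap (X Y : Finset ℤ) (P : ℤ × ℤ → Prop) [DecidablePred P] :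
    ((X ×ˢ Y).filter P).card = ((Y ×ˢ X).filter (fun z => P (z.2, z.1))).card := by
  refine Finset.card_bij (fun z _ => z.swap) ?_ ?_ ?_
  · intro z hz
    simp only [Finset.mem_filter, Finset.mem_product] at hz ⊢
    exact ⟨⟨hz.1.2, hz.1.1⟩, hz.2⟩
  · intro z1 h1 z2 h2 heq
    exact Prod.swap_injective heq
  · intro z hz
    simp only [Finset.mem_filter, Finset.mem_product] at hz
    exact ⟨(z.2, z.1), by simp [Finset.mem_filter, Finset.mem_product, hz.1.1, hz.1.2, hz.2], by simp⟩

lemma count2D' (e : ℕ) (he : 0 < e) (a b c d : ℤ)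
    (hsub : Finset.Icc c d ⊆ Finset.Icc a b) :
    e * ((Finset.Icc a b ×ˢ Finset.Icc c d).filter
        (fun z => z.1 ≠ z.2 ∧ (e:ℤ) ∣ z.1 - z.2)).card
      ≤ ((Finset.Icc a b ×ˢ Finset.Icc c d).filter (fun z => z.1 ≠ z.2)).card := by
  rw [card_swap _ _ (fun z => z.1 ≠ z.2 ∧ (e:ℤ) ∣ z.1 - z.2),
    card_swap _ _ (fun z => z.1 ≠ z.2)]
  have h1 : ((Finset.Icc c d ×ˢ Finset.Icc a b).filter
      (fun z => (z.2, z.1).1 ≠ (z.2, z.1).2 ∧ (e:ℤ) ∣ (z.2, z.1).1 - (z.2, z.1).2))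
      = ((Finset.Icc c d ×ˢ Finset.Icc a b).filter
      (fun z => z.1 ≠ z.2 ∧ (e:ℤ) ∣ z.1 - z.2)) := by
    apply Finset.filter_congr; intro z _
    constructor
    · rintro ⟨h, hd⟩; exact ⟨fun hh => h hh.symm, (dvd_sub_comm).mp hd⟩
    · rintro ⟨h, hd⟩; exact ⟨fun hh => h hh.symm, (dvd_sub_comm).mp hd⟩
  have h2 : ((Finset.Icc c d ×ˢ Finset.Icc a b).filter
      (fun z => (z.2, z.1).1 ≠ (z.2, z.1).2))
      = ((Finset.Icc c d ×ˢ Finset.Icc a b).filter (fun z => z.1 ≠ z.2)) := by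
    apply Finset.filter_congr; intro z _
    exact ⟨fun h hh => h hh.symm, fun h hh => h hh.symm⟩
  rw [h1, h2]
  exact count2D e he c d a b hsub

include hT in
lemma fiber_card (e : ℕ) (J : Finset (Fin k)) (i : Fin k) (hi : i ∈ I₀) (hiJ : i ∉ J)
    (q p₀ : (Fin k → ℤ) × (Fin k → ℤ)) (hp₀T : p₀ ∈ T)
    (hp₀J : ∀ j ∈ J, (e:ℤ) ∣ p₀.1 j - p₀.2 j)
    (hq : (Function.update p₀.1 i 0, Function.update p₀.2 i 0) = q)
    (Q : ℤ → ℤ → Prop) [∀ x y, Decidable (Q x y)] :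
    ((T.filter (fun p => (∀ j ∈ J, (e:ℤ) ∣ p.1 j - p.2 j) ∧ Q (p.1 i) (p.2 i))).filter
        (fun p => (Function.update p.1 i 0, Function.update p.2 i 0) = q)).card
      = (((Finset.Icc (if undir then -((M:ℤ) - ∑ j, |q.1 j|) else 0) ((M:ℤ) - ∑ j, |q.1 j|)) ×ˢ
          (Finset.Icc (if undir then -((M:ℤ) - ∑ j, |q.2 j|) else 0) ((M:ℤ) - ∑ j, |q.2 j|))).filter
        (fun z => z.1 ≠ z.2 ∧ Q z.1 z.2)).card := by
  have hq1 : q.1 = Function.update p₀.1 i 0 := by rw [← hq]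
  have hq2 : q.2 = Function.update p₀.2 i 0 := by rw [← hq]
  have hq1i : q.1 i = 0 := by rw [hq1]; simp
  have hq2i : q.2 i = 0 := by rw [hq2]; simp
  have hp₀ev := (hT p₀).mp hp₀T
  obtain ⟨hb₀1, hb₀2, hdiff₀⟩ := hp₀ev
  rw [inBall_iff] at hb₀1 hb₀2
  set Rx := (M:ℤ) - ∑ j, |q.1 j| with hRx
  set Ry := (M:ℤ) - ∑ j, |q.2 j| with hRy
  -- sum computations
  have hsq1 : (∑ j, |q.1 j|) = (∑ j, |p₀.1 j|) - |p₀.1 i| := by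
    rw [hq1, sumAbs_update]; simp
  have hsq2 : (∑ j, |q.2 j|) = (∑ j, |p₀.2 j|) - |p₀.2 i| := by
    rw [hq2, sumAbs_update]; simp
  refine Finset.card_bij' (fun p _ => (p.1 i, p.2 i))
    (fun z _ => (Function.update q.1 i z.1, Function.update q.2 i z.2)) ?_ ?_ ?_ ?_
  · -- forward membership
    intro p hp
    simp only [Finset.mem_filter] at hp
    obtain ⟨⟨hpT, hpJ, hpQ⟩, hπ⟩ := hp
    have hπ1 : Function.update p.1 i 0 = q.1 := by rw [← hπ]
    have hπ2 : Function.update p.2 i 0 = q.2 := by rw [← hπ]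
    have hpev := (hT p).mp hpT
    obtain ⟨hb1, hb2, hdiff⟩ := hpev
    rw [inBall_iff] at hb1 hb2
    have hs1 : (∑ j, |q.1 j|) = (∑ j, |p.1 j|) - |p.1 i| := by
      rw [← hπ1, sumAbs_update]; simp
    have hs2 : (∑ j, |q.2 j|) = (∑ j, |p.2 j|) - |p.2 i| := by
      rw [← hπ2, sumAbs_update]; simp
    have hxa : |p.1 i| ≤ Rx := by rw [hRx, hs1]; have := hb1.1; omega
    have hya : |p.2 i| ≤ Ry := by rw [hRy, hs2]; have := hb2.1; omega
    have hne : p.1 i ≠ p.2 i := by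
      have : i ∈ {j | p.1 j ≠ p.2 j} := by rw [hdiff]; exact_mod_cast hi
      exact this
    simp only [Finset.mem_filter, Finset.mem_product, Finset.mem_Icc]
    refine ⟨⟨?_, ?_⟩, hne, hpQ⟩
    · cases undir with
      | false =>
        simp only [if_neg (by simp : ¬ (false = true))]
        constructor
        · exact hb1.2 rfl i
        · have := abs_le.mp hxa; omega
      | true =>
        simp only [if_pos rfl]
        have := abs_le.mp hxa
        exact ⟨this.1, this.2⟩
    · cases undir with
      | false =>
        simp only [if_neg (by simp : ¬ (false = true))]
        constructor
        · exact hb2.2 rfl i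
        · have := abs_le.mp hya; omega
      | true =>
        simp only [if_pos rfl]
        have := abs_le.mp hya
        exact ⟨this.1, this.2⟩
  · -- backward membership
    intro z hz
    simp only [Finset.mem_filter, Finset.mem_product, Finset.mem_Icc] at hz
    obtain ⟨⟨hzx, hzy⟩, hzne, hzQ⟩ := hz
    have hxa : |z.1| ≤ Rx := by
      cases undir with
      | false =>
        simp only [if_neg (by simp : ¬ (false = true))] at hzx
        rw [abs_of_nonneg hzx.1]; exact hzx.2
      | true =>
        simp only [if_pos rfl] at hzx
        exact abs_le.mpr hzx
    have hya : |z.2| ≤ Ry := by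
      cases undir with
      | false =>
        simp only [if_neg (by simp : ¬ (false = true))] at hzy
        rw [abs_of_nonneg hzy.1]; exact hzy.2
      | true =>
        simp only [if_pos rfl] at hzy
        exact abs_le.mpr hzy
    simp only [Finset.mem_filter]
    refine ⟨⟨?_, ?_, ?_⟩, ?_⟩
    · -- membership in T, i.e. in the event
      rw [hT]
      refine ⟨?_, ?_, ?_⟩
      · rw [inBall_iff]
        constructor
        · rw [sumAbs_update, hq1i]
          simp only [abs_zero]
          rw [hRx] at hxa; omega
        · intro hu j
          rcases eq_or_ne j i with rfl | hji
          · simp only [hu] at hzx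
            simpa using hzx.1
          · simpa [Function.update_of_ne hji, hq1] using hb₀1.2 hu j
      · rw [inBall_iff]
        constructor
        · rw [sumAbs_update, hq2i]
          simp only [abs_zero]
          rw [hRy] at hya; omega
        · intro hu j
          rcases eq_or_ne j i with rfl | hji
          · simp only [hu] at hzy
            simpa using hzy.1
          · simpa [Function.update_of_ne hji, hq2] using hb₀2.2 hu j
      · -- difference pattern
        ext j
        simp only [Set.mem_setOf_eq]
        rcases eq_or_ne j i with rfl | hji
        · simp only [Function.update_self]
          constructor
          · intro _; exact_mod_cast hi
          · intro _; exact hzne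
        · simp only [Function.update_of_ne hji, hq1, hq2, Function.update_of_ne hji]
          have : (p₀.1 j ≠ p₀.2 j) ↔ j ∈ (I₀ : Set (Fin k)) := by
            rw [← hdiff₀]; rfl
          exact this
    · -- J divisibility
      intro j hj
      have hji : j ≠ i := by rintro rfl; exact hiJ hj
      simp only [Function.update_of_ne hji, hq1, hq2, Function.update_of_ne hji]
      exact hp₀J j hj
    · -- Q at i
      simp only [Function.update_self]
      exact hzQ
    · -- π p = q
      have e1 : Function.update (Function.update q.1 i z.1) i 0 = q.1 := by
        rw [Function.update_idem, ← hq1i, Function.update_eq_self]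
      have e2 : Function.update (Function.update q.2 i z.2) i 0 = q.2 := by
        rw [Function.update_idem, ← hq2i, Function.update_eq_self]
      simp [e1, e2]
  · -- left inverse
    intro p hp
    simp only [Finset.mem_filter] at hp
    have hπ1 : Function.update p.1 i 0 = q.1 := by rw [← hp.2]
    have hπ2 : Function.update p.2 i 0 = q.2 := by rw [← hp.2]
    have e1 : Function.update q.1 i (p.1 i) = p.1 := by
      rw [← hπ1, Function.update_idem, Function.update_eq_self]
    have e2 : Function.update q.2 i (p.2 i) = p.2 := by
      rw [← hπ2, Function.update_idem, Function.update_eq_self]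
    simp [e1, e2]
  · -- right inverse
    intro z hz
    simp

include hT in
lemma step_lemma (e : ℕ) (he : 0 < e) (J : Finset (Fin k)) (i : Fin k)
    (hi : i ∈ I₀) (hiJ : i ∉ J) :
    e * (T.filter (fun p => ∀ j ∈ insert i J, (e:ℤ) ∣ p.1 j - p.2 j)).card
      ≤ (T.filter (fun p => ∀ j ∈ J, (e:ℤ) ∣ p.1 j - p.2 j)).card := by
  classical
  set π : ((Fin k → ℤ) × (Fin k → ℤ)) → ((Fin k → ℤ) × (Fin k → ℤ)) :=
    fun p => (Function.update p.1 i 0, Function.update p.2 i 0) with hπ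
  set TJ := T.filter (fun p => ∀ j ∈ J, (e:ℤ) ∣ p.1 j - p.2 j) with hTJ
  set Ti := T.filter (fun p => ∀ j ∈ insert i J, (e:ℤ) ∣ p.1 j - p.2 j) with hTi
  have hsub : Ti ⊆ TJ := by
    intro p hp
    rw [hTi, Finset.mem_filter] at hp
    rw [hTJ, Finset.mem_filter]
    exact ⟨hp.1, fun j hj => hp.2 j (Finset.mem_insert_of_mem hj)⟩
  set B := TJ.image π with hB
  rw [Finset.card_eq_sum_card_fiberwise
    (f := π) (t := B) (fun p hp => Finset.mem_image_of_mem π hp)]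
  rw [Finset.card_eq_sum_card_fiberwise
    (f := π) (t := B) (s := Ti) (fun p hp => Finset.mem_image_of_mem π (hsub hp))]
  rw [Finset.mul_sum]
  refine Finset.sum_le_sum fun q hq => ?_
  obtain ⟨p₀, hp₀TJ, hπp₀⟩ := Finset.mem_image.mp hq
  rw [hTJ, Finset.mem_filter] at hp₀TJ
  -- rewrite both fibers via fiber_card
  have hfib1 : (Ti.filter (fun p => π p = q)).card
      = (((Finset.Icc (if undir then -((M:ℤ) - ∑ j, |q.1 j|) else 0) ((M:ℤ) - ∑ j, |q.1 j|)) ×ˢ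
          (Finset.Icc (if undir then -((M:ℤ) - ∑ j, |q.2 j|) else 0) ((M:ℤ) - ∑ j, |q.2 j|))).filter
        (fun z => z.1 ≠ z.2 ∧ (e:ℤ) ∣ z.1 - z.2)).card := by
    have hTi' : Ti = T.filter
        (fun p => (∀ j ∈ J, (e:ℤ) ∣ p.1 j - p.2 j) ∧ (e:ℤ) ∣ p.1 i - p.2 i) := by
      rw [hTi]
      apply Finset.filter_congr
      intro p _
      rw [Finset.forall_mem_insert]
      exact ⟨fun ⟨h1, h2⟩ => ⟨h2, h1⟩, fun ⟨h1, h2⟩ => ⟨h2, h1⟩⟩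
    rw [hTi']
    exact fiber_card hT e J i hi hiJ q p₀ hp₀TJ.1 hp₀TJ.2 hπp₀ (fun x y => (e:ℤ) ∣ x - y)
  have hfib2 : (TJ.filter (fun p => π p = q)).card
      = (((Finset.Icc (if undir then -((M:ℤ) - ∑ j, |q.1 j|) else 0) ((M:ℤ) - ∑ j, |q.1 j|)) ×ˢ
          (Finset.Icc (if undir then -((M:ℤ) - ∑ j, |q.2 j|) else 0) ((M:ℤ) - ∑ j, |q.2 j|))).filter
        (fun z => z.1 ≠ z.2 ∧ True)).card := by
    have hTJ' : TJ = T.filter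
        (fun p => (∀ j ∈ J, (e:ℤ) ∣ p.1 j - p.2 j) ∧ True) := by
      rw [hTJ]
      apply Finset.filter_congr
      intro p _
      simp
    rw [hTJ']
    exact fiber_card hT e J i hi hiJ q p₀ hp₀TJ.1 hp₀TJ.2 hπp₀ (fun _ _ => True)
  rw [hfib1, hfib2]
  have htrue : (((Finset.Icc (if undir then -((M:ℤ) - ∑ j, |q.1 j|) else 0) ((M:ℤ) - ∑ j, |q.1 j|)) ×ˢ
          (Finset.Icc (if undir then -((M:ℤ) - ∑ j, |q.2 j|) else 0) ((M:ℤ) - ∑ j, |q.2 j|))).filter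
        (fun z => z.1 ≠ z.2 ∧ True))
      = (((Finset.Icc (if undir then -((M:ℤ) - ∑ j, |q.1 j|) else 0) ((M:ℤ) - ∑ j, |q.1 j|)) ×ˢ
          (Finset.Icc (if undir then -((M:ℤ) - ∑ j, |q.2 j|) else 0) ((M:ℤ) - ∑ j, |q.2 j|))).filter
        (fun z => z.1 ≠ z.2)) := by
    apply Finset.filter_congr; intro z _; simp
  rw [htrue]
  set Rx := (M:ℤ) - ∑ j, |q.1 j|
  set Ry := (M:ℤ) - ∑ j, |q.2 j|
  rcases le_or_gt Rx Ry with hle | hlt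
  · apply count2D e he
    cases undir with
    | false =>
      have e1 : (if (false = true) then -Rx else 0) = 0 := rfl
      have e2 : (if (false = true) then -Ry else 0) = 0 := rfl
      rw [e1, e2]
      exact Finset.Icc_subset_Icc le_rfl hle
    | true =>
      have e1 : (if (true = true) then -Rx else 0) = -Rx := rfl
      have e2 : (if (true = true) then -Ry else 0) = -Ry := rfl
      rw [e1, e2]
      exact Finset.Icc_subset_Icc (neg_le_neg hle) hle
  · apply count2D' e he
    cases undir with
    | false =>
      have e1 : (if (false = true) then -Rx else 0) = 0 := rfl
      have e2 : (if (false = true) then -Ry else 0) = 0 := rfl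
      rw [e1, e2]
      exact Finset.Icc_subset_Icc le_rfl hlt.le
    | true =>
      have e1 : (if (true = true) then -Rx else 0) = -Rx := rfl
      have e2 : (if (true = true) then -Ry else 0) = -Ry := rfl
      rw [e1, e2]
      exact Finset.Icc_subset_Icc (neg_le_neg hlt.le) hlt.le

include hT in
lemma key_lemma (e : ℕ) (he : 0 < e) (J : Finset (Fin k)) (hJ : J ⊆ I₀) :
    e ^ J.card * (T.filter (fun p => ∀ j ∈ J, (e:ℤ) ∣ p.1 j - p.2 j)).card ≤ T.card := by
  classical
  induction J using Finset.induction_on with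
  | empty =>
    simp only [Finset.card_empty, pow_zero, one_mul]
    exact Finset.card_le_card (Finset.filter_subset _ _)
  | @insert i J hiJ ih =>
    have hi : i ∈ I₀ := hJ (Finset.mem_insert_self i J)
    have hJ' : J ⊆ I₀ := fun j hj => hJ (Finset.mem_insert_of_mem hj)
    rw [Finset.card_insert_of_notMem hiJ, pow_succ]
    calc e ^ J.card * e * (T.filter (fun p => ∀ j ∈ insert i J, (e:ℤ) ∣ p.1 j - p.2 j)).card
        = e ^ J.card * (e * (T.filter (fun p => ∀ j ∈ insert i J, (e:ℤ) ∣ p.1 j - p.2 j)).card) := by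
          ring
      _ ≤ e ^ J.card * (T.filter (fun p => ∀ j ∈ J, (e:ℤ) ∣ p.1 j - p.2 j)).card := by
          exact Nat.mul_le_mul_left _ (step_lemma hT e he J i hi hiJ)
      _ ≤ T.card := ih hJ'


end steps

-- Bezout

lemma bezout_finset {ι : Type*} [DecidableEq ι] (s : Finset ι) (v : ι → ℤ) :
    ∃ c : ι → ℤ, ∑ i ∈ s, c i * v i = ((s.gcd fun i => (v i).natAbs : ℕ) : ℤ) := by
  classical
  induction s using Finset.induction_on with
  | empty => exact ⟨fun _ => 0, by simp⟩
  | @insert a s ha ih =>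
    obtain ⟨c, hc⟩ := ih
    rw [Finset.gcd_insert]
    set G : ℕ := s.gcd fun i => (v i).natAbs with hG
    have hgcd : (Nat.gcd (v a).natAbs G : ℤ) = Int.gcd (v a) (G : ℤ) := by
      rw [Int.gcd]
      simp
    refine ⟨fun i => if i = a then Int.gcdA (v a) (G:ℤ)
      else c i * Int.gcdB (v a) (G:ℤ), ?_⟩
    rw [Finset.sum_insert ha]
    have h1 : ∑ i ∈ s, (if i = a then Int.gcdA (v a) (G:ℤ)
        else c i * Int.gcdB (v a) (G:ℤ)) * v i
        = (∑ i ∈ s, c i * v i) * Int.gcdB (v a) (G:ℤ) := by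
      rw [Finset.sum_mul]
      refine Finset.sum_congr rfl fun i hi => ?_
      have : i ≠ a := by rintro rfl; exact ha hi
      simp [this]; ring
    rw [h1, hc]
    have := Int.gcd_eq_gcd_ab (v a) (G : ℤ)
    have hnorm : Nat.gcd (v a).natAbs G = Int.gcd (v a) (G:ℤ) := by
      rw [Int.gcd]; simp
    have hmono : GCDMonoid.gcd ((v a).natAbs) G = Nat.gcd ((v a).natAbs) G := rfl
    rw [hmono, hnorm]
    simp only [eq_self_iff_true, if_true]
    rw [this]; ring

-- cardinality of the a-torsion of ZMod m
lemma card_torsion_le (m a : ℕ) [NeZero m] :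
    Nat.card {y : ZMod m // (a : ℤ) • y = 0} ≤ Nat.gcd a m := by
  classical
  set ψ : ZMod m →+ ZMod m := AddMonoidHom.mk' (fun y => (a:ℤ) • y)
    (fun x y => smul_add _ x y) with hψ
  have hcardeq : Nat.card (ZMod m) = Nat.card (ZMod m ⧸ ψ.ker) * Nat.card ψ.ker :=
    AddSubgroup.card_eq_card_quotient_mul_card_addSubgroup ψ.ker
  have hquot : Nat.card (ZMod m ⧸ ψ.ker) = Nat.card ψ.range :=
    Nat.card_congr (QuotientAddGroup.quotientKerEquivRange ψ).toEquiv
  have hm : m ≠ 0 := NeZero.ne m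
  -- range contains zmultiples of (a : ZMod m)
  have hmem : (a : ZMod m) ∈ ψ.range := by
    refine ⟨1, ?_⟩
    show (a:ℤ) • (1 : ZMod m) = (a : ZMod m)
    rw [zsmul_eq_mul]
    push_cast
    ring
  have hzle : AddSubgroup.zmultiples ((a : ZMod m)) ≤ ψ.range :=
    (AddSubgroup.zmultiples_le).mpr hmem
  have hordcard : Nat.card (AddSubgroup.zmultiples ((a : ZMod m))) = addOrderOf (a : ZMod m) :=
    Nat.card_zmultiples _
  have hord : addOrderOf (a : ZMod m) = m / Nat.gcd m a := ZMod.addOrderOf_coe a hm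
  have hrge : m / Nat.gcd m a ≤ Nat.card ψ.range := by
    rw [← hord, ← hordcard]
    exact AddSubgroup.card_le_of_le hzle
  -- conclude
  have hker_eq : Nat.card {y : ZMod m // (a : ℤ) • y = 0} = Nat.card ψ.ker := by
    apply Nat.card_congr
    apply Equiv.subtypeEquivRight
    intro y
    exact Iff.rfl
  rw [hker_eq]
  have hmcard : Nat.card (ZMod m) = m := by simp [Nat.card_eq_fintype_card, ZMod.card]
  have hgpos : 0 < Nat.gcd m a := Nat.gcd_pos_of_pos_left a (Nat.pos_of_ne_zero hm)
  have hgdvd : Nat.gcd m a ∣ m := Nat.gcd_dvd_left m a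
  have hqpos : 0 < m / Nat.gcd m a := Nat.div_pos (Nat.le_of_dvd (Nat.pos_of_ne_zero hm) hgdvd) hgpos
  by_contra hlt
  push_neg at hlt
  -- Nat.card ψ.ker ≥ gcd a m + 1
  have h1 : Nat.gcd a m + 1 ≤ Nat.card ψ.ker := hlt
  have h2 : m = Nat.card (ZMod m ⧸ ψ.ker) * Nat.card ψ.ker := by
    have h2' := hcardeq
    rw [hmcard] at h2'
    exact h2'
  have h3 : (m / Nat.gcd m a) * (Nat.gcd a m + 1) ≤ m := by
    calc (m / Nat.gcd m a) * (Nat.gcd a m + 1)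
        ≤ Nat.card (ZMod m ⧸ ψ.ker) * Nat.card ψ.ker := by
          apply Nat.mul_le_mul
          · rw [hquot]; exact hrge
          · exact h1
      _ = m := h2.symm
  have h4 : (m / Nat.gcd m a) * Nat.gcd m a = m := Nat.div_mul_cancel hgdvd
  have : Nat.gcd m a = Nat.gcd a m := Nat.gcd_comm m a
  nlinarith [hqpos]

lemma ball_abs_le {k : ℕ} {undir : Bool} {M : ℕ} {w : Fin k → ℤ} (h : inBall undir M w)
    (i : Fin k) : (w i).natAbs ≤ M :=
  le_trans (Finset.single_le_sum (f := fun i => (w i).natAbs) (fun j _ => Nat.zero_le _) (Finset.mem_univ i)) h.1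

lemma finite_pairEvent (undir : Bool) {k : ℕ} (M : ℕ) (I₀ : Finset (Fin k)) :
    (pairEvent undir M I₀).Finite := by
  classical
  have hS : (Set.pi Set.univ (fun _ : Fin k => Set.Icc (-(M:ℤ)) M)).Finite :=
    Set.Finite.pi (fun _ => Set.finite_Icc _ _)
  apply Set.Finite.subset (hS.prod hS)
  rintro ⟨w1, w2⟩ ⟨hb1, hb2, _⟩
  constructor
  · intro i _
    have := ball_abs_le hb1 i
    have h2 : |w1 i| ≤ (M:ℤ) := by
      rw [← Int.natCast_natAbs]
      exact_mod_cast this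
    exact Set.mem_Icc.mpr (abs_le.mp h2)
  · intro i _
    have := ball_abs_le hb2 i
    have h2 : |w2 i| ≤ (M:ℤ) := by
      rw [← Int.natCast_natAbs]
      exact_mod_cast this
    exact Set.mem_Icc.mpr (abs_le.mp h2)

lemma sum_inv_sq_aux (m : ℕ) (hm : 1 ≤ m) :
    ∑ e ∈ Finset.Icc 2 m, (1:ℝ)/(e:ℝ)^2 ≤ 1 - 1/(m:ℝ) := by
  induction m, hm using Nat.le_induction with
  | base => simp [Finset.Icc_eq_empty_of_lt]
  | succ m hm ih =>
    rw [Finset.sum_Icc_succ_top (by omega : 2 ≤ m + 1)]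
    have h1 : (0:ℝ) < m := by exact_mod_cast hm
    have h2 : (0:ℝ) < m + 1 := by positivity
    have key : (1:ℝ)/((m:ℝ)+1)^2 ≤ 1/(m:ℝ) - 1/((m:ℝ)+1) := by
      rw [div_sub_div _ _ (ne_of_gt h1) (ne_of_gt h2)]
      rw [div_le_div_iff₀ (by positivity) (by positivity)]
      ring_nf
      nlinarith
    have : ((m:ℕ):ℝ) + 1 = ((m+1 : ℕ):ℝ) := by push_cast; ring
    calc (∑ e ∈ Finset.Icc 2 m, (1:ℝ)/(e:ℝ)^2) + (1:ℝ)/((m+1:ℕ):ℝ)^2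
        ≤ (1 - 1/(m:ℝ)) + (1/(m:ℝ) - 1/((m:ℝ)+1)) := by
          apply add_le_add ih
          rw [← this] at *
          exact key
      _ = 1 - 1/((m:ℝ)+1) := by ring
      _ = 1 - 1/((m+1:ℕ):ℝ) := by rw [← this]

lemma sum_inv_sq (m : ℕ) : ∑ e ∈ Finset.Icc 2 m, (1:ℝ)/(e:ℝ)^2 ≤ 1 := by
  rcases Nat.eq_zero_or_pos m with rfl | hm
  · simp
  · calc ∑ e ∈ Finset.Icc 2 m, (1:ℝ)/(e:ℝ)^2 ≤ 1 - 1/(m:ℝ) := sum_inv_sq_aux m hm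
      _ ≤ 1 := by
        have : (0:ℝ) < m := by exact_mod_cast hm
        have : (0:ℝ) ≤ 1/(m:ℝ) := by positivity
        linarith

lemma pointwise_nat {d k : ℕ} (m : Fin d → ℕ) [∀ j, NeZero (m j)] (v : Fin k → ℤ)
    (n : ℕ) (hn : n = Fintype.card (∀ j, ZMod (m j))) :
    n * Nat.card {Z : Fin k → (∀ j, ZMod (m j)) // (∑ i, v i • Z i) = 0}
      ≤ (gcdWithN v n) ^ d * n ^ k := by
  classical
  set G := ∀ j, ZMod (m j) with hG
  set g' : ℕ := Finset.univ.gcd fun i => (v i).natAbs with hg'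
  set g : ℕ := Nat.gcd g' n with hg
  have hgw : gcdWithN v n = g := rfl
  -- the homomorphism φ
  set φ : (Fin k → G) →+ G := AddMonoidHom.mk' (fun Z => ∑ i, v i • Z i)
    (fun Z₁ Z₂ => by
      simp only [Pi.add_apply, smul_add]
      rw [Finset.sum_add_distrib]) with hφ
  set ψ : G →+ G := AddMonoidHom.mk' (fun x => (g' : ℤ) • x)
    (fun x y => smul_add _ x y) with hψ
  obtain ⟨c, hc⟩ := bezout_finset Finset.univ v
  rw [← hg'] at hc
  have hrange : ψ.range ≤ φ.range := by
    rintro x ⟨y, rfl⟩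
    refine ⟨fun i => c i • y, ?_⟩
    show (∑ i, v i • (c i • y)) = (g' : ℤ) • y
    rw [← hc, Finset.sum_smul]
    exact Finset.sum_congr rfl fun i _ => by rw [smul_smul, mul_comm]
  -- cardinalities
  have hcard1 : Nat.card (Fin k → G) = Nat.card (φ.range) * Nat.card (φ.ker) := by
    rw [AddSubgroup.card_eq_card_quotient_mul_card_addSubgroup φ.ker]
    congr 1
    exact (Nat.card_congr (QuotientAddGroup.quotientKerEquivRange φ).toEquiv)
  have hcard2 : Nat.card G = Nat.card (ψ.range) * Nat.card (ψ.ker) := by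
    rw [AddSubgroup.card_eq_card_quotient_mul_card_addSubgroup ψ.ker]
    congr 1
    exact (Nat.card_congr (QuotientAddGroup.quotientKerEquivRange ψ).toEquiv)
  -- card of ker ψ
  have hkerψ : Nat.card (ψ.ker) ≤ g ^ d := by
    have hequiv : Nat.card (ψ.ker) = Nat.card (∀ j, {y : ZMod (m j) // (g' : ℤ) • y = 0}) := by
      apply Nat.card_congr
      refine (Equiv.subtypeEquivRight ?_).trans (Equiv.subtypePiEquivPi)
      intro x
      show ψ x = 0 ↔ ∀ j, (g' : ℤ) • x j = 0
      constructor
      · intro h j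
        have : ((g' : ℤ) • x) j = (0 : G) j := by rw [← h]; rfl
        exact this
      · intro h
        show (g' : ℤ) • x = 0
        funext j
        exact h j
    rw [hequiv, Nat.card_pi]
    calc ∏ j, Nat.card {y : ZMod (m j) // (g' : ℤ) • y = 0}
        ≤ ∏ j : Fin d, g := by
          apply Finset.prod_le_prod
          · intro j _; exact Nat.zero_le _
          · intro j _
            calc Nat.card {y : ZMod (m j) // (g' : ℤ) • y = 0}
                ≤ Nat.gcd g' (m j) := card_torsion_le (m j) g'
              _ ≤ g := by
                  apply Nat.le_of_dvd
                  · apply Nat.gcd_pos_of_pos_right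
                    rw [hn]
                    exact Fintype.card_pos
                  · apply Nat.dvd_gcd
                    · exact Nat.gcd_dvd_left _ _
                    · calc Nat.gcd g' (m j) ∣ m j := Nat.gcd_dvd_right _ _
                        _ ∣ n := by
                            rw [hn]
                            rw [Fintype.card_pi]
                            have : ∀ j', Fintype.card (ZMod (m j')) = m j' := fun j' => ZMod.card _
                            rw [Finset.prod_congr rfl (fun j' _ => this j')]
                            exact Finset.dvd_prod_of_mem _ (Finset.mem_univ j)
      _ = g ^ d := by simp [Finset.prod_const]
  -- main chain
  have hnG : Nat.card G = n := by rw [hn]; exact Nat.card_eq_fintype_card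
  have h5 : n ≤ g ^ d * Nat.card (φ.range) := by
    calc n = Nat.card (ψ.range) * Nat.card (ψ.ker) := by rw [← hnG, hcard2]
      _ ≤ Nat.card (φ.range) * (g ^ d) := by
          apply Nat.mul_le_mul
          · exact AddSubgroup.card_le_of_le hrange
          · exact hkerψ
      _ = g ^ d * Nat.card (φ.range) := Nat.mul_comm _ _
  have hkerφ : Nat.card {Z : Fin k → G // (∑ i, v i • Z i) = 0} = Nat.card (φ.ker) := by
    apply Nat.card_congr
    apply Equiv.subtypeEquivRight
    intro Z
    exact Iff.rfl
  have hnk : Nat.card (Fin k → G) = n ^ k := by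
    rw [Nat.card_eq_fintype_card, Fintype.card_fun, Fintype.card_fin, hn]
  have hrpos : 0 < Nat.card (φ.range) := Nat.card_pos
  rw [hgw, hkerφ]
  have hmain : n * Nat.card (φ.ker) * Nat.card (φ.range) ≤ g ^ d * n ^ k * Nat.card (φ.range) := by
    calc n * Nat.card (φ.ker) * Nat.card (φ.range)
        = n * (Nat.card (φ.range) * Nat.card (φ.ker)) := by ring
      _ = n * n ^ k := by rw [← hcard1, hnk]
      _ ≤ (g ^ d * Nat.card (φ.range)) * n ^ k := Nat.mul_le_mul_right _ h5
      _ = g ^ d * n ^ k * Nat.card (φ.range) := by ring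
  exact Nat.le_of_mul_le_mul_right hmain hrpos

end auxiliary

set_option maxHeartbeats 1000000 in
theorem statement16 :
    ∃ C : ℝ, 0 < C ∧
    ∀ (d k M : ℕ), 0 < d → 0 < k → 0 < M →
    ∀ (m : Fin d → ℕ) [∀ j, NeZero (m j)],
      (∀ j, 2 * M < m j) →
      minGenAdd (∀ j, ZMod (m j)) = d →
      ∀ n : ℕ, n = Fintype.card (∀ j, ZMod (m j)) →
      ∀ undir : Bool, ∀ I₀ : Finset (Fin k), I₀.Nonempty →
      ∀ A E P : ℝ,
        A = (Nat.card {p : (Fin k → ℤ) × (Fin k → ℤ) // p ∈ pairEvent undir M I₀} : ℝ) →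
        E = (∑' p : (Fin k → ℤ) × (Fin k → ℤ),
              Set.indicator (pairEvent undir M I₀)
                (fun p => (gcdWithN (fun i => p.1 i - p.2 i) n : ℝ) ^ d) p) / A →
        P = (∑' p : (Fin k → ℤ) × (Fin k → ℤ),
              Set.indicator (pairEvent undir M I₀)
                (fun p => tupleProb (∀ j, ZMod (m j)) k
                  (fun Z => (∑ i, (p.1 i - p.2 i) • Z i) = 0)) p) / A →
        ((n : ℝ) * P ≤ E ∧
          (I₀.card ≤ d + 1 →
            E ≤ C * 2 ^ d * (2 * (M : ℝ)) ^ ((d : ℝ) - (I₀.card : ℝ) + 2)) ∧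
          (d + 2 ≤ I₀.card →
            E ≤ 1 + 5 * (3 / 2 : ℝ) ^ (2 * (d : ℝ) - (I₀.card : ℝ)))) := by
  classical
  refine ⟨2, by norm_num, ?_⟩
  intro d k M hd hk hM m inst hmbig hmin n hn undir I₀ hI₀ A E P hA hE hP
  have hfin := finite_pairEvent undir M I₀
  set T := hfin.toFinset with hT'
  have hTmem : ∀ p, p ∈ T ↔ p ∈ pairEvent undir M I₀ := fun p => hfin.mem_toFinset
  have hAT : A = (T.card : ℝ) := by
    rw [hA]
    congr 1
    rw [Nat.card_coe_set_eq, Set.ncard_eq_toFinset_card _ hfin]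
  set s := I₀.card with hs
  have hs1 : 1 ≤ s := Finset.card_pos.mpr hI₀
  have hnpos : 0 < n := by rw [hn]; exact Fintype.card_pos
  have hM2 : (2:ℝ) ≤ 2 * (M:ℝ) := by
    have : (1:ℝ) ≤ (M:ℝ) := by exact_mod_cast hM
    linarith
  -- rewrite the tsums as finite sums
  have hEe : E = (∑ p ∈ T, (gcdWithN (fun i => p.1 i - p.2 i) n : ℝ) ^ d) / (T.card : ℝ) := by
    rw [hE, hAT]
    congr 1
    rw [tsum_eq_sum (s := T)
      (fun p hp => Set.indicator_of_notMem (fun hmem => hp ((hTmem p).mpr hmem)) _)]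
    exact Finset.sum_congr rfl fun p hp => Set.indicator_of_mem ((hTmem p).mp hp) _
  have hPe : P = (∑ p ∈ T, tupleProb (∀ j, ZMod (m j)) k
      (fun Z => (∑ i, (p.1 i - p.2 i) • Z i) = 0)) / (T.card : ℝ) := by
    rw [hP, hAT]
    congr 1
    rw [tsum_eq_sum (s := T)
      (fun p hp => Set.indicator_of_notMem (fun hmem => hp ((hTmem p).mpr hmem)) _)]
    exact Finset.sum_congr rfl fun p hp => Set.indicator_of_mem ((hTmem p).mp hp) _
  -- pointwise part-1 bound
  have hpoint : ∀ p : (Fin k → ℤ) × (Fin k → ℤ),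
      (n:ℝ) * tupleProb (∀ j, ZMod (m j)) k (fun Z => (∑ i, (p.1 i - p.2 i) • Z i) = 0)
      ≤ (gcdWithN (fun i => p.1 i - p.2 i) n : ℝ) ^ d := by
    intro p
    have hnat := pointwise_nat m (fun i => p.1 i - p.2 i) n hn
    rw [tupleProb]
    rw [← hn]
    have hnk : (0:ℝ) < (n:ℝ)^k := by positivity
    rw [mul_div_assoc']
    rw [div_le_iff₀ hnk]
    exact_mod_cast hnat
  rcases Nat.eq_zero_or_pos T.card with hA0 | hApos
  · -- empty event: everything is zero
    have hEz : E = 0 := by rw [hEe, hA0]; norm_num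
    have hPz : P = 0 := by rw [hPe, hA0]; norm_num
    refine ⟨by rw [hEz, hPz]; simp, ?_, ?_⟩
    · intro _
      rw [hEz]
      have h2M : (0:ℝ) < 2 * (M:ℝ) := by linarith
      positivity
    · intro _
      rw [hEz]
      positivity
  -- nonempty case
  have hAr : (0:ℝ) < (T.card : ℝ) := by exact_mod_cast hApos
  refine ⟨?_, ?_, ?_⟩
  · -- part 1
    rw [hPe, hEe, ← mul_div_assoc]
    rw [div_le_div_iff_of_pos_right hAr]
    rw [Finset.mul_sum]
    exact Finset.sum_le_sum (fun p _ => hpoint p)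
  all_goals (
  -- the master bound E ≤ 1 + B
  have hkeyN : ∀ e ∈ Finset.Icc 2 (2*M),
      ((T.filter (fun p => ∀ i ∈ I₀, (e:ℤ) ∣ p.1 i - p.2 i)).card : ℝ)
        ≤ (T.card : ℝ) / (e:ℝ)^s := by
    intro e he
    have he2 : 2 ≤ e := (Finset.mem_Icc.mp he).1
    have hkk := key_lemma hTmem e (by omega) I₀ (subset_refl I₀)
    rw [le_div_iff₀ (by positivity : (0:ℝ) < (e:ℝ)^s)]
    calc ((T.filter (fun p => ∀ i ∈ I₀, (e:ℤ) ∣ p.1 i - p.2 i)).card : ℝ) * (e:ℝ)^s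
        = (((e ^ s * (T.filter (fun p => ∀ i ∈ I₀, (e:ℤ) ∣ p.1 i - p.2 i)).card : ℕ)) : ℝ) := by
          push_cast; ring
      _ ≤ (T.card : ℝ) := by exact_mod_cast hkk
  have hpt : ∀ p ∈ T, (gcdWithN (fun i => p.1 i - p.2 i) n : ℝ)^d
      ≤ 1 + ∑ e ∈ Finset.Icc 2 (2*M), (e:ℝ)^d *
          (if (∀ i ∈ I₀, (e:ℤ) ∣ p.1 i - p.2 i) then (1:ℝ) else 0) := by
    intro p hp
    set gp := gcdWithN (fun i => p.1 i - p.2 i) n with hgp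
    obtain ⟨hb1, hb2, hdiff⟩ := (hTmem p).mp hp
    have hg1 : 1 ≤ gp := Nat.gcd_pos_of_pos_right _ hnpos
    obtain ⟨i₀, hi₀⟩ := hI₀
    have hnonneg : (0:ℝ) ≤ ∑ e ∈ Finset.Icc 2 (2*M), (e:ℝ)^d *
        (if (∀ i ∈ I₀, (e:ℤ) ∣ p.1 i - p.2 i) then (1:ℝ) else 0) := by
      apply Finset.sum_nonneg
      intro e _
      have h0 : (0:ℝ) ≤ (e:ℝ)^d := by positivity
      split <;> simp [h0]
    rcases eq_or_lt_of_le hg1 with heq | hgt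
    · rw [← heq]
      push_cast
      simp only [one_pow]
      linarith
    · -- 2 ≤ gp
      have hVne : p.1 i₀ - p.2 i₀ ≠ 0 := by
        have hmem : i₀ ∈ {i | p.1 i ≠ p.2 i} := by rw [hdiff]; exact_mod_cast hi₀
        simp only [Set.mem_setOf_eq] at hmem
        exact sub_ne_zero.mpr hmem
      have hVle : (p.1 i₀ - p.2 i₀).natAbs ≤ 2*M := by
        have h1 := ball_abs_le hb1 i₀
        have h2 := ball_abs_le hb2 i₀
        have h3 := Int.natAbs_sub_le (p.1 i₀) (p.2 i₀)
        omega
      have hdvd0 : gp ∣ (p.1 i₀ - p.2 i₀).natAbs := by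
        rw [hgp]
        exact dvd_trans (Nat.gcd_dvd_left _ _) (Finset.gcd_dvd (Finset.mem_univ i₀))
      have hVpos : 0 < (p.1 i₀ - p.2 i₀).natAbs := Int.natAbs_pos.mpr hVne
      have hg2M : gp ≤ 2*M := le_trans (Nat.le_of_dvd hVpos hdvd0) hVle
      have hmem : gp ∈ Finset.Icc 2 (2*M) := Finset.mem_Icc.mpr ⟨hgt, hg2M⟩
      have hdvdall : ∀ i ∈ I₀, (gp:ℤ) ∣ p.1 i - p.2 i := by
        intro i _
        have h4 : gp ∣ (p.1 i - p.2 i).natAbs := by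
          rw [hgp]
          exact dvd_trans (Nat.gcd_dvd_left _ _) (Finset.gcd_dvd (Finset.mem_univ i))
        exact Int.dvd_natAbs.mp (Int.natCast_dvd_natCast.mpr h4)
      have hterm := Finset.single_le_sum
        (f := fun (e : ℕ) => (e:ℝ)^d * (if (∀ i ∈ I₀, (e:ℤ) ∣ p.1 i - p.2 i) then (1:ℝ) else 0))
        (fun e _ => mul_nonneg (by positivity) (by split <;> norm_num)) hmem
      simp only [if_pos hdvdall, mul_one] at hterm
      linarith
  set B := ∑ e ∈ Finset.Icc 2 (2*M), (e:ℝ)^d / (e:ℝ)^s with hB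
  have hEB : E ≤ 1 + B := by
    have h6 : (∑ p ∈ T, (gcdWithN (fun i => p.1 i - p.2 i) n : ℝ) ^ d)
        ≤ (T.card : ℝ) * (1 + B) := by
      calc (∑ p ∈ T, (gcdWithN (fun i => p.1 i - p.2 i) n : ℝ) ^ d)
          ≤ ∑ p ∈ T, (1 + ∑ e ∈ Finset.Icc 2 (2*M), (e:ℝ)^d *
              (if (∀ i ∈ I₀, (e:ℤ) ∣ p.1 i - p.2 i) then (1:ℝ) else 0)) :=
            Finset.sum_le_sum hpt
        _ = (T.card : ℝ) + ∑ e ∈ Finset.Icc 2 (2*M), (e:ℝ)^d *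
              ((T.filter (fun p => ∀ i ∈ I₀, (e:ℤ) ∣ p.1 i - p.2 i)).card : ℝ) := by
            rw [Finset.sum_add_distrib, Finset.sum_const, nsmul_eq_mul, mul_one]
            congr 1
            rw [Finset.sum_comm]
            refine Finset.sum_congr rfl fun e _ => ?_
            rw [← Finset.sum_boole (p := fun (p : (Fin k → ℤ) × (Fin k → ℤ)) => ∀ i ∈ I₀, (e:ℤ) ∣ p.1 i - p.2 i) (s := T), Finset.mul_sum]
        _ ≤ (T.card : ℝ) + ∑ e ∈ Finset.Icc 2 (2*M), (e:ℝ)^d * ((T.card : ℝ) / (e:ℝ)^s) := by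
            apply add_le_add le_rfl
            apply Finset.sum_le_sum
            intro e he
            exact mul_le_mul_of_nonneg_left (hkeyN e he) (by positivity)
        _ = (T.card : ℝ) * (1 + B) := by
            rw [hB, mul_add, mul_one, Finset.mul_sum]
            congr 1
            refine Finset.sum_congr rfl fun e _ => ?_
            ring
    rw [hEe, div_le_iff₀ hAr]
    linarith [h6])
  · -- part 2
    intro hcard
    have hcard' : s ≤ d + 1 := hcard
    set u := d + 1 - s with hu
    have hus : d + 1 = u + s := by omega
    have hB2 : B ≤ (2*(M:ℝ))^(u+1) := by
      have hperterm : ∀ e ∈ Finset.Icc 2 (2*M), (e:ℝ)^d / (e:ℝ)^s ≤ (2*(M:ℝ))^u := by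
        intro e he
        rw [Finset.mem_Icc] at he
        have he1 : (1:ℝ) ≤ (e:ℝ) := by
          have : 1 ≤ e := by omega
          exact_mod_cast this
        have heM : (e:ℝ) ≤ 2*(M:ℝ) := by
          have := he.2
          push_cast
          exact_mod_cast this
        have h1 : (e:ℝ)^d / (e:ℝ)^s ≤ (e:ℝ)^u := by
          rw [div_le_iff₀ (by positivity : (0:ℝ) < (e:ℝ)^s), ← pow_add]
          apply pow_le_pow_right₀ he1
          omega
        calc (e:ℝ)^d / (e:ℝ)^s ≤ (e:ℝ)^u := h1
          _ ≤ (2*(M:ℝ))^u := pow_le_pow_left₀ (by linarith) heM u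
      have hcardIcc : ((Finset.Icc 2 (2*M)).card : ℝ) ≤ 2*(M:ℝ) := by
        rw [Nat.card_Icc]
        have h1 : 2*M + 1 - 2 ≤ 2*M := by omega
        calc ((2*M + 1 - 2 : ℕ):ℝ) ≤ ((2*M : ℕ):ℝ) := by exact_mod_cast h1
          _ = 2*(M:ℝ) := by push_cast; ring
      calc B ≤ ∑ _e ∈ Finset.Icc 2 (2*M), (2*(M:ℝ))^u := Finset.sum_le_sum hperterm
        _ = ((Finset.Icc 2 (2*M)).card : ℝ) * (2*(M:ℝ))^u := by
            rw [Finset.sum_const, nsmul_eq_mul]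
        _ ≤ (2*(M:ℝ)) * (2*(M:ℝ))^u :=
            mul_le_mul_of_nonneg_right hcardIcc (by positivity)
        _ = (2*(M:ℝ))^(u+1) := by ring
    have hone : (1:ℝ) ≤ (2*(M:ℝ))^(u+1) := one_le_pow₀ (by linarith)
    have hrpoweq : (2 * (M : ℝ)) ^ ((d : ℝ) - (s : ℝ) + 2) = (2*(M:ℝ))^(u+1) := by
      have hexp : (d : ℝ) - (s : ℝ) + 2 = ((u + 1 : ℕ) : ℝ) := by
        have h1 : u + 1 = d + 2 - s := by omega
        rw [h1, Nat.cast_sub (by omega : s ≤ d + 2)]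
        push_cast
        ring
      rw [hexp, Real.rpow_natCast]
    rw [hrpoweq]
    have h2d : (1:ℝ) ≤ 2^d := one_le_pow₀ (by norm_num)
    have hpow0 : (0:ℝ) ≤ (2*(M:ℝ))^(u+1) := by positivity
    calc E ≤ 1 + B := hEB
      _ ≤ 1 + (2*(M:ℝ))^(u+1) := by linarith [hB2]
      _ ≤ 2 * (2*(M:ℝ))^(u+1) := by linarith [hone]
      _ ≤ 2 * 2^d * (2*(M:ℝ))^(u+1) := by nlinarith [hpow0, h2d]
  · -- part 3
    intro hcard
    have hcard' : d + 2 ≤ s := hcard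
    set w := s - d - 2 with hw
    have hws : s = d + 2 + w := by omega
    have hB3 : B ≤ (1/2:ℝ)^w := by
      have hperterm : ∀ e ∈ Finset.Icc 2 (2*M), (e:ℝ)^d / (e:ℝ)^s
          ≤ (1/(e:ℝ)^2) * (1/2:ℝ)^w := by
        intro e he
        rw [Finset.mem_Icc] at he
        have he2 : (2:ℝ) ≤ (e:ℝ) := by exact_mod_cast he.1
        have hepos : (0:ℝ) < (e:ℝ) := by linarith
        have hes : (e:ℝ)^s = (e:ℝ)^d * ((e:ℝ)^2 * (e:ℝ)^w) := by
          rw [hws]; ring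
        rw [hes]
        have hd0 : (e:ℝ)^d ≠ 0 := by positivity
        have heq2 : (e:ℝ)^d / ((e:ℝ)^d * ((e:ℝ)^2 * (e:ℝ)^w))
            = (1/(e:ℝ)^2) * (1/(e:ℝ)^w) := by
          field_simp
        rw [heq2]
        apply mul_le_mul_of_nonneg_left _ (by positivity)
        have h2w : (2:ℝ)^w ≤ (e:ℝ)^w := pow_le_pow_left₀ (by norm_num) he2 w
        have h2wp : (0:ℝ) < (2:ℝ)^w := by positivity
        calc (1:ℝ)/(e:ℝ)^w ≤ 1/(2:ℝ)^w := by
              apply one_div_le_one_div_of_le h2wp h2w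
          _ = (1/2:ℝ)^w := by rw [div_pow, one_pow]
      calc B ≤ ∑ e ∈ Finset.Icc 2 (2*M), (1/(e:ℝ)^2) * (1/2:ℝ)^w :=
            Finset.sum_le_sum hperterm
        _ = (∑ e ∈ Finset.Icc 2 (2*M), 1/(e:ℝ)^2) * (1/2:ℝ)^w := by
            rw [Finset.sum_mul]
        _ ≤ 1 * (1/2:ℝ)^w :=
            mul_le_mul_of_nonneg_right (sum_inv_sq _) (by positivity)
        _ = (1/2:ℝ)^w := one_mul _
    have hkey3 : (1/2:ℝ)^w ≤ 5 * (3/2:ℝ) ^ (2 * (d:ℝ) - (s:ℝ)) := by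
      have hexp : 2 * (d:ℝ) - (s:ℝ) = ((2*d : ℕ):ℝ) - ((s : ℕ):ℝ) := by push_cast; ring
      rw [hexp, Real.rpow_sub (by norm_num : (0:ℝ) < 3/2), Real.rpow_natCast,
        Real.rpow_natCast]
      rw [mul_div_assoc']
      rw [le_div_iff₀ (by positivity : (0:ℝ) < (3/2:ℝ)^s)]
      have e2 : (3/2:ℝ)^(2*d) = ((3/2:ℝ)^d)^2 := by rw [mul_comm, pow_mul]
      have e1 : (3/2:ℝ)^s = (3/2:ℝ)^d * ((3/2:ℝ)^2 * (3/2:ℝ)^w) := by rw [hws]; ring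
      have e3 : (1/2:ℝ)^w * (3/2:ℝ)^w = (3/4:ℝ)^w := by
        rw [← mul_pow]; norm_num
      have hX : (3/2:ℝ) ≤ (3/2:ℝ)^d := by
        calc (3/2:ℝ) = (3/2:ℝ)^1 := (pow_one _).symm
          _ ≤ (3/2:ℝ)^d := pow_le_pow_right₀ (by norm_num) hd
      have h34 : ((3:ℝ)/4)^w ≤ 1 := by
        calc ((3:ℝ)/4)^w ≤ 1^w := pow_le_pow_left₀ (by norm_num) (by norm_num) w
          _ = 1 := one_pow w
      have hXpos : (0:ℝ) < (3/2:ℝ)^d := by positivity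
      have step1 : (1/2:ℝ)^w * ((3/2:ℝ)^d * ((3/2:ℝ)^2 * (3/2:ℝ)^w))
          = (3/4:ℝ)^w * ((9/4) * (3/2:ℝ)^d) := by
        rw [← e3]; ring
      rw [e1, e2, step1]
      have step2 : (3/4:ℝ)^w * ((9/4) * (3/2:ℝ)^d) ≤ 1 * ((9/4) * (3/2:ℝ)^d) :=
        mul_le_mul_of_nonneg_right h34 (by positivity)
      have step3 : (9/4:ℝ) * (3/2:ℝ)^d ≤ 5 * ((3/2:ℝ)^d)^2 := by
        nlinarith [hX, hXpos]
      linarith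
    calc E ≤ 1 + B := hEB
      _ ≤ 1 + (1/2:ℝ)^w := by linarith [hB3]
      _ ≤ 1 + 5 * (3/2:ℝ) ^ (2 * (d:ℝ) - (s:ℝ)) := by linarith [hkey3]
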